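/- arXiv:math/0206114 — 2 statements merged into one kernel-verified Lean document; each statement's English description precedes it below -/
import Mathlib

section
/- The bilinear map ω on the Witt algebra defined by ω(l_n,l_m) = 0 for n,m odd, ω(l_n,l_m) = 3(m−n) l_{n+m−2} for n,m even, and ω(l_n,l_m) = 3(m−n−1) l_{n+m−2} for n odd and m even (extended skew-symmetrically), is a 2-cocycle of the Witt algebra with values in its adjoint module: d₂ω = 0, i.e. the cyclic sum ω([l_n,l_m], l_k) − [l_n, ω(l_m,l_k)] + (cyclic) vanishes. -/
noncomputable section

/-- Bilinear extension of structure constants `C` to a bracket on `ℤ →₀ ℂ`. -/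
def br (C : ℤ → ℤ → (ℤ →₀ ℂ)) (x y : ℤ →₀ ℂ) : ℤ →₀ ℂ :=
  x.sum fun n a => y.sum fun m b => (a * b) • C n m

/-- Structure constants of the Witt algebra: `[l_n, l_m] = (m - n) l_{n+m}`. -/
def wittC (n m : ℤ) : ℤ →₀ ℂ := Finsupp.single (n + m) ((m : ℂ) - (n : ℂ))

/-- The cochain `ω`: `0` for `n,m` odd, `3(m-n) l_{n+m-2}` for `n,m` even,
`3(m-n-1) l_{n+m-2}` for `n` odd, `m` even, extended skew-symmetrically. -/
def omC (n m : ℤ) : ℤ →₀ ℂ :=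
  if Odd n then
    if Odd m then 0
    else Finsupp.single (n + m - 2) (3 * ((m : ℂ) - n - 1))
  else
    if Odd m then -Finsupp.single (n + m - 2) (3 * ((n : ℂ) - m - 1))
    else Finsupp.single (n + m - 2) (3 * ((m : ℂ) - n))

set_option maxHeartbeats 1000000
set_option linter.deprecated false
set_option linter.unreachableTactic false
set_option linter.unusedTactic false

lemma br_zero_left (C) (y : ℤ →₀ ℂ) : br C 0 y = 0 := by simp [br]

lemma br_zero_right (C) (x : ℤ →₀ ℂ) : br C x 0 = 0 := by simp [br]

lemma br_add_left (C) (x x' y : ℤ →₀ ℂ) : br C (x + x') y = br C x y + br C x' y := by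
  unfold br
  rw [Finsupp.sum_add_index] <;> intros <;> simp [add_mul, add_smul, Finsupp.sum_add]

lemma br_add_right (C) (x y y' : ℤ →₀ ℂ) : br C x (y + y') = br C x y + br C x y' := by
  unfold br
  rw [← Finsupp.sum_add]
  apply Finsupp.sum_congr
  intro n _
  rw [Finsupp.sum_add_index] <;> intros <;> simp [mul_add, add_smul]

lemma br_single_single (C) (n m : ℤ) (a b : ℂ) :
    br C (Finsupp.single n a) (Finsupp.single m b) = (a * b) • C n m := by
  unfold br
  rw [Finsupp.sum_single_index, Finsupp.sum_single_index] <;> simp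

lemma br_smul_left (C) (c : ℂ) (x y : ℤ →₀ ℂ) : br C (c • x) y = c • br C x y := by
  unfold br
  rw [Finsupp.sum_smul_index, Finsupp.smul_sum] <;> intros <;>
    simp [mul_assoc, mul_smul, Finsupp.smul_sum]

lemma br_smul_right (C) (c : ℂ) (x y : ℤ →₀ ℂ) : br C x (c • y) = c • br C x y := by
  unfold br
  rw [Finsupp.smul_sum]
  apply Finsupp.sum_congr
  intro n _
  rw [Finsupp.sum_smul_index, Finsupp.smul_sum] <;> intros <;>
    simp [mul_smul, mul_left_comm]

lemma key (n m k : ℤ) (a b c : ℂ) :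
    br omC (br wittC (Finsupp.single n a) (Finsupp.single m b)) (Finsupp.single k c)
      + br omC (br wittC (Finsupp.single m b) (Finsupp.single k c)) (Finsupp.single n a)
      + br omC (br wittC (Finsupp.single k c) (Finsupp.single n a)) (Finsupp.single m b)
      - br wittC (Finsupp.single n a) (br omC (Finsupp.single m b) (Finsupp.single k c))
      - br wittC (Finsupp.single m b) (br omC (Finsupp.single k c) (Finsupp.single n a))
      - br wittC (Finsupp.single k c) (br omC (Finsupp.single n a) (Finsupp.single m b)) = 0 := by
  rcases em (Odd n) with hn | hn <;> rcases em (Odd m) with hm | hm <;>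
    rcases em (Odd k) with hk | hk <;>
  · simp only [br_single_single, wittC, omC, br_smul_left, br_smul_right, Finsupp.smul_single,
      smul_eq_mul, Int.odd_add, hn, hm, hk, Int.not_even_iff_odd, Int.not_odd_iff_even,
      ← Int.not_odd_iff_even,
      iff_true, iff_false, not_true, not_false_iff, if_true, if_false, not_not,
      ← Finsupp.single_neg, br_zero_right, smul_neg, smul_zero, mul_zero, zero_mul,
      neg_neg, mul_neg, neg_mul, br_single_single]
    ring_nf
    ext p
    simp only [Finsupp.add_apply, Finsupp.sub_apply, Finsupp.neg_apply, Finsupp.zero_apply,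
      Finsupp.single_apply]
    split_ifs <;> first | (push_cast; ring) | omega

/-- `ω` is a 2-cocycle of the Witt algebra with values in the adjoint module: `d₂ω = 0`. -/
theorem omega_is_cocycle (x y z : ℤ →₀ ℂ) :
    br omC (br wittC x y) z + br omC (br wittC y z) x + br omC (br wittC z x) y
      - br wittC x (br omC y z) - br wittC y (br omC z x) - br wittC z (br omC x y) = 0 := by
  induction x using Finsupp.induction_linear with
  | zero => simp [br_zero_left, br_zero_right]
  | add u v hu hv =>
    simp only [br_add_left, br_add_right]
    linear_combination (norm := module) hu + hv
  | single n a =>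
    induction y using Finsupp.induction_linear with
    | zero => simp [br_zero_left, br_zero_right]
    | add u v hu hv =>
      simp only [br_add_left, br_add_right]
      linear_combination (norm := module) hu + hv
    | single m b =>
      induction z using Finsupp.induction_linear with
      | zero => simp [br_zero_left, br_zero_right]
      | add u v hu hv =>
        simp only [br_add_left, br_add_right]
        linear_combination (norm := module) hu + hv
      | single k c => exact key n m k a b c
end
end

section
/- The bilinear map β⁽¹⁾ on L₁ defined by β⁽¹⁾(l_n, l_m) = (m−n) l_{n+m−1} is a 2-coboundary: there is a linear map γ : L₁ → L₁ with β⁽¹⁾ = d₁γ, hence its class in H²(L₁,L₁) is zero. -/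
noncomputable section

/-- Index set for `L₁`: integers `n ≥ 1`. -/
abbrev PosIdx : Type := {n : ℤ // 1 ≤ n}

/-- Bilinear extension of structure constants `C` to a bracket on the free module. -/
def brP (C : PosIdx → PosIdx → (PosIdx →₀ ℂ)) (x y : PosIdx →₀ ℂ) : PosIdx →₀ ℂ :=
  x.sum fun n a => y.sum fun m b => (a * b) • C n m

/-- Structure constants of `L₁`: `[l_n, l_m] = (m-n) l_{n+m}`. -/
def L1C (n m : PosIdx) : PosIdx →₀ ℂ :=
  Finsupp.single ⟨n.1 + m.1, by have := n.2; have := m.2; omega⟩ ((m.1 : ℂ) - (n.1 : ℂ))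

/-- The cochain `β⁽¹⁾(l_n, l_m) = (m-n) l_{n+m-1}`. -/
def beta1C (n m : PosIdx) : PosIdx →₀ ℂ :=
  Finsupp.single ⟨n.1 + m.1 - 1, by have := n.2; have := m.2; omega⟩ ((m.1 : ℂ) - (n.1 : ℂ))

/-- Basis values of the potential `γ`: `γ(l_n) = ((n-1)/2) l_{n-1}` (zero when `n=1`). -/
def gfun (n : PosIdx) : PosIdx →₀ ℂ :=
  Finsupp.single ⟨max (n.1 - 1) 1, le_max_right _ _⟩ (((n.1 : ℂ) - 1) / 2)

lemma brP_zero_left (C : PosIdx → PosIdx → (PosIdx →₀ ℂ)) (y : PosIdx →₀ ℂ) :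
    brP C 0 y = 0 := by
  simp [brP]

lemma brP_zero_right (C : PosIdx → PosIdx → (PosIdx →₀ ℂ)) (x : PosIdx →₀ ℂ) :
    brP C x 0 = 0 := by
  simp [brP]

lemma brP_add_left (C : PosIdx → PosIdx → (PosIdx →₀ ℂ)) (x x' y : PosIdx →₀ ℂ) :
    brP C (x + x') y = brP C x y + brP C x' y := by
  unfold brP
  rw [Finsupp.sum_add_index]
  · intro n _; simp
  · intro n _ a a'
    rw [← Finsupp.sum_add]
    congr 1; funext m b
    rw [add_mul, add_smul]

lemma brP_add_right (C : PosIdx → PosIdx → (PosIdx →₀ ℂ)) (x y y' : PosIdx →₀ ℂ) :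
    brP C x (y + y') = brP C x y + brP C x y' := by
  unfold brP
  rw [← Finsupp.sum_add]
  congr 1; funext n a
  rw [Finsupp.sum_add_index]
  · intro m _; simp
  · intro m _ b b'
    rw [mul_add, add_smul]

lemma brP_single_single (C : PosIdx → PosIdx → (PosIdx →₀ ℂ)) (n m : PosIdx) (a b : ℂ) :
    brP C (Finsupp.single n a) (Finsupp.single m b) = (a * b) • C n m := by
  unfold brP
  rw [Finsupp.sum_single_index, Finsupp.sum_single_index]
  · simp
  · simp [Finsupp.sum_single_index]

/-- The key computation on basis vectors. -/
lemma core (n m : PosIdx) (a b : ℂ) :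
    (a * b) • beta1C n m =
      (a * b) • ((Finsupp.linearCombination ℂ gfun) (L1C n m))
      - brP L1C (a • gfun n) (Finsupp.single m b)
      - brP L1C (Finsupp.single n a) (b • gfun m) := by
  obtain ⟨n, hn⟩ := n
  obtain ⟨m, hm⟩ := m
  simp only [gfun, Finsupp.smul_single, L1C, beta1C, Finsupp.linearCombination_single,
    brP_single_single, Finsupp.smul_single]
  rcases eq_or_lt_of_le hn with h1 | h1 <;> rcases eq_or_lt_of_le hm with h2 | h2
  · -- n = 1, m = 1
    subst h1; subst h2
    norm_num
  · -- n = 1, 1 < m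
    subst h1
    have e1 : ((1 + m - 1 : ℤ) ⊔ 1) = m := by omega
    have e3 : ((m - 1 : ℤ) ⊔ 1) = m - 1 := by omega
    simp only [e1, e3]
    ext ⟨k, hk⟩
    simp only [Finsupp.coe_sub, Pi.sub_apply, Finsupp.single_apply, Subtype.mk.injEq]
    split_ifs <;> push_cast <;> first | (exfalso; omega) | (field_simp; try ring)
  · -- 1 < n, m = 1
    subst h2
    have e1 : ((n + 1 - 1 : ℤ) ⊔ 1) = n := by omega
    have e2 : ((n - 1 : ℤ) ⊔ 1) = n - 1 := by omega
    simp only [e1, e2]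
    ext ⟨k, hk⟩
    simp only [Finsupp.coe_sub, Pi.sub_apply, Finsupp.single_apply, Subtype.mk.injEq]
    split_ifs <;> push_cast <;> first | (exfalso; omega) | (field_simp; try ring)
  · -- 1 < n, 1 < m
    have e1 : ((n + m - 1 : ℤ) ⊔ 1) = n + m - 1 := by omega
    have e2 : ((n - 1 : ℤ) ⊔ 1) = n - 1 := by omega
    have e3 : ((m - 1 : ℤ) ⊔ 1) = m - 1 := by omega
    simp only [e1, e2, e3]
    ext ⟨k, hk⟩
    simp only [Finsupp.coe_sub, Pi.sub_apply, Finsupp.single_apply, Subtype.mk.injEq]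
    split_ifs <;> push_cast <;> first | (exfalso; omega) | (field_simp; try ring)

/-- `β⁽¹⁾` is a 2-coboundary: `β⁽¹⁾ = d₁γ` for some linear map `γ : L₁ → L₁`;
hence its class in `H²(L₁,L₁)` is zero. -/
theorem beta1_is_coboundary :
    ∃ γ : (PosIdx →₀ ℂ) →ₗ[ℂ] (PosIdx →₀ ℂ),
      ∀ x y : PosIdx →₀ ℂ,
        brP beta1C x y = γ (brP L1C x y) - brP L1C (γ x) y - brP L1C x (γ y) := by
  refine ⟨Finsupp.linearCombination ℂ gfun, fun x y => ?_⟩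
  induction x using Finsupp.induction_linear with
  | zero => simp [brP_zero_left]
  | add f g hf hg =>
      simp only [brP_add_left, map_add, hf, hg]
      abel
  | single n a =>
      induction y using Finsupp.induction_linear with
      | zero => simp [brP_zero_right]
      | add f g hf hg =>
          simp only [brP_add_right, map_add, hf, hg]
          abel
      | single m b =>
          rw [brP_single_single, brP_single_single, map_smul,
            Finsupp.linearCombination_single, Finsupp.linearCombination_single]
          exact core n m a b
end
end
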